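/- For 0 < q < p ≤ 1 and natural numbers m ≥ 2, n ≥ 1, the (p,q)-Beta function satisfies the recurrence B_{p,q}(m,n) = ([m-1]_{p,q} / (p^{m-1} [n]_{p,q})) · B_{p,q}(m-1, n+1). -/

import Mathlib

noncomputable section

/-- The (p,q)-number [n]_{p,q} = (p^n - q^n)/(p - q). -/
def pqNum (p q : ℝ) (n : ℕ) : ℝ := (p ^ n - q ^ n) / (p - q)

/-- The (p,q)-factorial [n]_{p,q}!. -/
def pqFactorial (p q : ℝ) (n : ℕ) : ℝ := ∏ k ∈ Finset.range n, pqNum p q (k + 1)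

/-- The (p,q)-binomial coefficient. -/
def pqBinom (p q : ℝ) (n k : ℕ) : ℝ :=
  pqFactorial p q n / (pqFactorial p q (n - k) * pqFactorial p q k)

/-- The (p,q)-power basis (a ⊖ b)^n_{p,q} = ∏_{j=0}^{n-1} (p^j a - q^j b). -/
def pqPow (p q a b : ℝ) (n : ℕ) : ℝ := ∏ j ∈ Finset.range n, (p ^ j * a - q ^ j * b)

/-- The (p,q)-derivative. -/
def pqDeriv (p q : ℝ) (f : ℝ → ℝ) (x : ℝ) : ℝ := (f (p * x) - f (q * x)) / ((p - q) * x)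

/-- The (p,q)-integral of f over [0,1] (case 0 < q < p). -/
def pqInt (p q : ℝ) (f : ℝ → ℝ) : ℝ :=
  (p - q) * ∑' k : ℕ, (q ^ k / p ^ (k + 1)) * f (q ^ k / p ^ (k + 1))

/-- The (p,q)-Beta function B_{p,q}(m,n) = ∫₀¹ x^{m-1} (1 ⊖ qx)^{n-1} d_{p,q}x. -/
def pqBeta (p q : ℝ) (m n : ℕ) : ℝ :=
  pqInt p q (fun x => x ^ (m - 1) * pqPow p q 1 (q * x) (n - 1))

/-- The (p,q)-Gamma function: Γ_{p,q}(n+1) = [n]_{p,q}!. -/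
def pqGamma (p q : ℝ) (n : ℕ) : ℝ := pqFactorial p q (n - 1)

/-- The (p,q)-Bernstein basis b_{n,k}^{p,q}(1,x). -/
def bBasis (p q : ℝ) (n k : ℕ) (x : ℝ) : ℝ :=
  pqBinom p q n k * p ^ (k * (k - 1) / 2) / p ^ (n * (n - 1) / 2) * x ^ k *
    pqPow p q 1 x (n - k)

/-- The kernel b_{n,k}^{p,q}(t) = [n choose k] t^k (1 ⊖ qt)^{n-k}. -/
def bKernel (p q : ℝ) (n k : ℕ) (t : ℝ) : ℝ :=
  pqBinom p q n k * t ^ k * pqPow p q 1 (q * t) (n - k)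

/-- The (p,q)-Bernstein operator B_{n,p,q}(f,x). -/
def pqBernstein (p q : ℝ) (n : ℕ) (f : ℝ → ℝ) (x : ℝ) : ℝ :=
  ∑ k ∈ Finset.range (n + 1),
    bBasis p q n k x * f (p ^ (n - k) * pqNum p q k / pqNum p q n)

/-- The (p,q)-Bernstein-Durrmeyer operator D_n^{p,q}(f,x). -/
def pqDurrmeyer (p q : ℝ) (n : ℕ) (f : ℝ → ℝ) (x : ℝ) : ℝ :=
  pqNum p q (n + 1) *
    ∑ k ∈ Finset.Icc 1 n, (p ^ ((n - k + 1) * (n + k) / 2))⁻¹ * bBasis p q n k x *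
      pqInt p q (fun t => bKernel p q n (k - 1) t * f t)
  + bBasis p q n 0 x * f 0

private lemma pq_prod_le_one (n : ℕ) (f : ℕ → ℝ) (hf : ∀ j, |f j| ≤ 1) :
    |∏ j ∈ Finset.range n, f j| ≤ 1 := by
  rw [Finset.abs_prod]
  calc ∏ j ∈ Finset.range n, |f j| ≤ ∏ j ∈ Finset.range n, 1 :=
        Finset.prod_le_prod (fun _ _ => abs_nonneg _) (fun j _ => hf j)
    _ = 1 := Finset.prod_const_one

private lemma pq_summable (p q : ℝ) (hq : 0 < q) (hqp : q < p) (a : ℕ) (F : ℕ → ℝ)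
    (hF : ∀ k, |F k| ≤ 1) :
    Summable (fun k => (q ^ k / p ^ (k + 1)) ^ (a + 1) * F k) := by
  have hp0 : 0 < p := hq.trans hqp
  have hr0 : 0 ≤ q / p := le_of_lt (div_pos hq hp0)
  have hr1 : q / p < 1 := (div_lt_one hp0).mpr hqp
  apply Summable.of_norm_bounded
    ((summable_geometric_of_lt_one hr0 hr1).mul_left (1 / p ^ (a + 1)))
  intro k
  have hwk : q ^ k / p ^ (k + 1) = (q / p) ^ k / p := by
    rw [div_pow, pow_succ]; ring
  have hrk : ((q / p) ^ k) ^ (a + 1) ≤ (q / p) ^ k := by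
    calc ((q / p) ^ k) ^ (a + 1) ≤ ((q / p) ^ k) ^ 1 :=
          pow_le_pow_of_le_one (by positivity) (pow_le_one₀ hr0 hr1.le) (by omega)
      _ = (q / p) ^ k := pow_one _
  rw [Real.norm_eq_abs, abs_mul, abs_pow]
  have habs : |q ^ k / p ^ (k + 1)| = q ^ k / p ^ (k + 1) := abs_of_nonneg (by positivity)
  rw [habs, hwk, div_pow]
  calc ((q / p) ^ k) ^ (a + 1) / p ^ (a + 1) * |F k|
      ≤ ((q / p) ^ k) ^ (a + 1) / p ^ (a + 1) * 1 := by
        apply mul_le_mul_of_nonneg_left (hF k) (by positivity)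
    _ = ((q / p) ^ k) ^ (a + 1) / p ^ (a + 1) := mul_one _
    _ ≤ (q / p) ^ k / p ^ (a + 1) := by
        apply div_le_div_of_nonneg_right ?_ (by positivity)
        exact hrk
    _ = 1 / p ^ (a + 1) * (q / p) ^ k := by ring

theorem pqBeta_rec (p q : ℝ) (hq : 0 < q) (hqp : q < p) (hp : p ≤ 1)
    (m n : ℕ) (hm : 2 ≤ m) (hn : 1 ≤ n) :
    pqBeta p q m n =
      pqNum p q (m - 1) / (p ^ (m - 1) * pqNum p q n) * pqBeta p q (m - 1) (n + 1) := by
  obtain ⟨M, rfl⟩ : ∃ M, m = M + 2 := ⟨m - 2, by omega⟩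
  obtain ⟨N, rfl⟩ : ∃ N, n = N + 1 := ⟨n - 1, by omega⟩
  have hp0 : 0 < p := hq.trans hqp
  have hpne : p ≠ 0 := hp0.ne'
  have hpq : p - q ≠ 0 := sub_ne_zero.mpr hqp.ne'
  have hq1 : q ≤ 1 := hqp.le.trans hp
  set w : ℕ → ℝ := fun k => q ^ k / p ^ (k + 1) with hw
  have hw0 : ∀ k, 0 < w k := fun k => by positivity
  have hwk : ∀ k, w k = (q / p) ^ k / p := by
    intro k; simp only [hw]; rw [div_pow, pow_succ]; ring
  have hwsucc : ∀ k, w (k + 1) = (q / p) * w k := by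
    intro k; rw [hwk, hwk, pow_succ]; ring
  have hrk1 : ∀ k, (q / p) ^ k ≤ 1 := fun k =>
    pow_le_one₀ (by positivity) ((div_le_one hp0).mpr hqp.le)
  have hpw : ∀ k, p * w k ≤ 1 := by
    intro k; rw [hwk, mul_div_cancel₀ _ hpne]; exact hrk1 k
  have hqw : ∀ k, q * w k ≤ 1 := by
    intro k
    calc q * w k ≤ p * w k := mul_le_mul_of_nonneg_right hqp.le (hw0 k).le
      _ ≤ 1 := hpw k
  -- factor bounds for the pqPow products
  have hPbd : ∀ k n', |pqPow p q 1 (q * w k) n'| ≤ 1 := by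
    intro k n'
    apply pq_prod_le_one
    intro j
    rw [abs_le]
    have h1 : p ^ j ≤ 1 := pow_le_one₀ hp0.le hp
    have h2 : 0 ≤ p ^ j := by positivity
    have h3 : q ^ j * (q * w k) ≤ 1 := by
      calc q ^ j * (q * w k) ≤ 1 * 1 :=
            mul_le_mul (pow_le_one₀ hq.le hq1) (hqw k) (by positivity) zero_le_one
        _ = 1 := one_mul 1
    have h4 : 0 ≤ q ^ j * (q * w k) := by positivity
    constructor <;> nlinarith
  set A : ℕ → ℝ := fun k => w k * (w k ^ (M + 1) * pqPow p q 1 (q * w k) N) with hA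
  set B : ℕ → ℝ := fun k => w k * (w k ^ M * pqPow p q 1 (q * w k) (N + 1)) with hB
  set G : ℕ → ℝ := fun k =>
    w k ^ (M + 1) * ∏ j ∈ Finset.range (N + 1), (p ^ j - q ^ j * p * w k) with hG
  -- summability
  have hAs : Summable A := by
    apply Summable.congr (pq_summable p q hq hqp (M + 1)
      (fun k => pqPow p q 1 (q * w k) N) (fun k => hPbd k N))
    intro k; simp only [hA, hw]; ring
  have hBs : Summable B := by
    apply Summable.congr (pq_summable p q hq hqp M
      (fun k => pqPow p q 1 (q * w k) (N + 1)) (fun k => hPbd k (N + 1)))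
    intro k; simp only [hB, hw]; ring
  have hGs : Summable G := by
    apply Summable.congr (pq_summable p q hq hqp M
      (fun k => ∏ j ∈ Finset.range (N + 1), (p ^ j - q ^ j * p * w k)) ?_)
    · intro k; simp only [hG, hw]
    · intro k
      apply pq_prod_le_one
      intro j
      rw [abs_le]
      have h1 : p ^ j ≤ 1 := pow_le_one₀ hp0.le hp
      have h2 : 0 ≤ p ^ j := by positivity
      have h3 : q ^ j * p * w k ≤ 1 := by
        calc q ^ j * p * w k = q ^ j * (p * w k) := by ring
          _ ≤ 1 * 1 := mul_le_mul (pow_le_one₀ hq.le hq1) (hpw k)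
              (by positivity) zero_le_one
          _ = 1 := one_mul 1
      have h4 : 0 ≤ q ^ j * p * w k := by positivity
      constructor <;> nlinarith
  -- the key per-term identity
  have key : ∀ k, pqNum p q (M + 1) * B k - p ^ (M + 1) * pqNum p q (N + 1) * A k
      = (p ^ (M + 1) / (p - q)) * (G k - G (k + 1)) := by
    intro k
    have hG1 : G (k + 1) = (q / p) ^ (M + 1) *
        (w k ^ (M + 1) * pqPow p q 1 (q * w k) (N + 1)) := by
      simp only [hG, hwsucc, pqPow, mul_pow]
      rw [mul_assoc]
      congr 1
      congr 1
      apply Finset.prod_congr rfl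
      intro j _
      field_simp
    have hG2 : G k = (1 - p * w k) *
        (p ^ N * (w k ^ (M + 1) * pqPow p q 1 (q * w k) N)) := by
      simp only [hG, pqPow]
      rw [Finset.prod_range_succ']
      have he : ∀ j ∈ Finset.range N,
          p ^ (j + 1) - q ^ (j + 1) * p * w k = p * (p ^ j * 1 - q ^ j * (q * w k)) := by
        intro j _; ring
      rw [Finset.prod_congr rfl he, Finset.prod_mul_distrib, Finset.prod_const,
        Finset.card_range]
      simp only [pow_zero]
      ring
    have hPsucc : pqPow p q 1 (q * w k) (N + 1)
        = pqPow p q 1 (q * w k) N * (p ^ N - q ^ N * (q * w k)) := by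
      simp only [pqPow, Finset.prod_range_succ, mul_one]
    simp only [hA, hB]
    rw [hG1, hG2, hPsucc]
    simp only [pqNum]
    rw [div_pow q p (M + 1)]
    field_simp
    ring
  -- telescoping
  have hGs' : Summable (fun k => G (k + 1)) := (summable_nat_add_iff 1).mpr hGs
  have htel : ∑' k, (G k - G (k + 1)) = G 0 := by
    rw [Summable.tsum_sub hGs hGs']
    have h0 := Summable.tsum_eq_zero_add hGs
    linarith
  have hG0 : G 0 = 0 := by
    have hmem : (0 : ℕ) ∈ Finset.range (N + 1) := Finset.mem_range.mpr (Nat.succ_pos N)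
    have hz : (∏ j ∈ Finset.range (N + 1), (p ^ j - q ^ j * p * w 0)) = 0 := by
      apply Finset.prod_eq_zero hmem
      simp only [hw, pow_zero, one_mul, zero_add, pow_one]
      field_simp
      norm_num
    simp only [hG, hz, mul_zero]
  -- main identity between the sums
  have main : pqNum p q (M + 1) * ∑' k, B k
      - p ^ (M + 1) * pqNum p q (N + 1) * ∑' k, A k = 0 := by
    rw [← tsum_mul_left, ← tsum_mul_left,
      ← Summable.tsum_sub (hBs.mul_left _) (hAs.mul_left _)]
    calc ∑' k, (pqNum p q (M + 1) * B k - p ^ (M + 1) * pqNum p q (N + 1) * A k)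
        = ∑' k, (p ^ (M + 1) / (p - q)) * (G k - G (k + 1)) := tsum_congr key
      _ = (p ^ (M + 1) / (p - q)) * ∑' k, (G k - G (k + 1)) := tsum_mul_left
      _ = 0 := by rw [htel, hG0, mul_zero]
  -- unfold pqBeta
  have e1 : pqBeta p q (M + 2) (N + 1) = (p - q) * ∑' k, A k := by
    simp only [pqBeta, pqInt, hA, hw]
    norm_num
  have e2 : pqBeta p q (M + 2 - 1) (N + 1 + 1) = (p - q) * ∑' k, B k := by
    simp only [pqBeta, pqInt, hB, hw]
    norm_num
  rw [e1, e2]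
  have hnum : pqNum p q (N + 1) ≠ 0 := by
    have h1 : q ^ (N + 1) < p ^ (N + 1) := pow_lt_pow_left₀ hqp hq.le (by omega)
    simp only [pqNum]
    exact ne_of_gt (div_pos (sub_pos.mpr h1) (sub_pos.mpr hqp))
  have hexp : M + 2 - 1 = M + 1 := rfl
  rw [hexp]
  rw [div_mul_eq_mul_div, eq_div_iff (by positivity : p ^ (M + 1) * pqNum p q (N + 1) ≠ 0)]
  linear_combination (q - p) * main
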